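/- arXiv:2408.00393 — 11 statements merged into one kernel-verified Lean document; each statement's English description precedes it below -/
import Mathlib

section
/- Let ζ : X ⇸ Y be a Q-map. Then ζ is symmetric (i.e., ζ*(y,x) = ζ(x,y) for all x ∈ X, y ∈ Y) if and only if the Q-relation ζ_s : X ⇸ Y defined by ζ_s(x,y) = ζ(x,y) ∧ ζ*(y,x) is a symmetric Q-map, i.e., id_X ≤ ζ_s^op ∘ ζ_s and ζ_s ∘ ζ_s^op ≤ id_Y, where ζ_s^op(y,x) = ζ_s(x,y). -/
open Classical

noncomputable section

/-- Composition of `Q`-relations: `(ψ ∘ φ)(x,z) = ⨆ y, ψ y z & φ x y`. -/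
def QR.comp {Q : Type*} [CompleteLattice Q] [Mul Q] {X Y Z : Type*}
    (ψ : Y → Z → Q) (φ : X → Y → Q) : X → Z → Q :=
  fun x z => ⨆ y, ψ y z * φ x y

/-- The identity `Q`-relation on `X`: `k` on the diagonal and `⊥` elsewhere. -/
def QR.id {Q : Type*} [CompleteLattice Q] [One Q] (X : Type*) : X → X → Q :=
  fun x y => if x = y then 1 else ⊥

/-- `ζ*(y,x) = ⨅ z, (ζ x z → id_Y y z)`, the canonical right-adjoint candidate of `ζ`
with respect to the residuation `himp`. -/
def QR.star {Q : Type*} [CompleteLattice Q] [One Q] {X Y : Type*}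
    (himp : Q → Q → Q) (ζ : X → Y → Q) : Y → X → Q :=
  fun y x => ⨅ z, himp (ζ x z) (QR.id Y y z)

/-- `ζ` is a `Q`-map: `id_X ≤ ζ* ∘ ζ` and `ζ ∘ ζ* ≤ id_Y`. -/
def QR.IsMap {Q : Type*} [CompleteLattice Q] [Mul Q] [One Q] {X Y : Type*}
    (himp : Q → Q → Q) (ζ : X → Y → Q) : Prop :=
  (∀ x x', QR.id X x x' ≤ QR.comp (QR.star himp ζ) ζ x x') ∧
  (∀ y y', QR.comp ζ (QR.star himp ζ) y y' ≤ QR.id Y y y')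

/-- a `Q`-map `ζ` is symmetric (`ζ*(y,x) = ζ(x,y)`) iff
`ζ_s(x,y) = ζ(x,y) ∧ ζ*(y,x)` is a symmetric `Q`-map, i.e.
`id_X ≤ ζ_s^op ∘ ζ_s` and `ζ_s ∘ ζ_s^op ≤ id_Y`. -/
theorem stmt4 {Q : Type*} [CompleteLattice Q] [CommMonoid Q]
    (hbot : (⊥ : Q) < 1)
    (hdist : ∀ (p : Q) (s : Set Q), p * sSup s = ⨆ q ∈ s, p * q)
    (himp : Q → Q → Q)
    (hres : ∀ p q r : Q, p * q ≤ r ↔ p ≤ himp q r)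
    {X Y : Type*} (ζ : X → Y → Q) (hζ : QR.IsMap himp ζ)
    (ζs : X → Y → Q) (hζs : ∀ x y, ζs x y = ζ x y ⊓ QR.star himp ζ y x) :
    (∀ (x : X) (y : Y), QR.star himp ζ y x = ζ x y) ↔
      ((∀ x x', QR.id X x x' ≤ QR.comp (fun y x => ζs x y) ζs x x') ∧
       (∀ y y', QR.comp ζs (fun y x => ζs x y) y y' ≤ QR.id Y y y')) := by
  -- basic multiplicative lemmas derived from distributivity
  have hmul_iSup : ∀ (p : Q) {ι : Type _} (f : ι → Q), p * (⨆ i, f i) = ⨆ i, p * f i := by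
    intro p ι f
    rw [iSup, hdist p (Set.range f), iSup_range]
  have hmul_bot : ∀ p : Q, p * ⊥ = ⊥ := by
    intro p
    have h := hdist p ∅
    simpa using h
  have hbot_mul : ∀ p : Q, ⊥ * p = ⊥ := by
    intro p; rw [mul_comm]; exact hmul_bot p
  have hmono : ∀ (p a b : Q), a ≤ b → p * a ≤ p * b := by
    intro p a b hab
    have h1 : p * sSup {a, b} = ⨆ q ∈ ({a, b} : Set Q), p * q := hdist p {a, b}
    have h2 : sSup ({a, b} : Set Q) = b := by
      rw [sSup_pair, sup_eq_right.mpr hab]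
    rw [h2] at h1
    rw [h1]
    exact le_biSup (fun q => p * q) (by simp : a ∈ ({a, b} : Set Q))
  have hmul_le : ∀ {a b c d : Q}, a ≤ b → c ≤ d → a * c ≤ b * d := by
    intro a b c d hab hcd
    calc a * c ≤ a * d := hmono a _ _ hcd
      _ = d * a := mul_comm _ _
      _ ≤ d * b := hmono d _ _ hab
      _ = b * d := mul_comm _ _
  -- the pointwise adjunction: ζ x z * ζ*(y,x) ≤ id_Y y z
  have hadj : ∀ (x : X) (y z : Y), ζ x z * QR.star himp ζ y x ≤ QR.id Y y z := by
    intro x y z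
    have h : QR.star himp ζ y x ≤ himp (ζ x z) (QR.id Y y z) := iInf_le _ z
    have h2 : QR.star himp ζ y x * ζ x z ≤ QR.id Y y z := (hres _ _ _).mpr h
    calc ζ x z * QR.star himp ζ y x = QR.star himp ζ y x * ζ x z := mul_comm _ _
      _ ≤ QR.id Y y z := h2
  have hle1 : ∀ x y, ζs x y ≤ ζ x y := fun x y => (hζs x y) ▸ inf_le_left
  have hle2 : ∀ x y, ζs x y ≤ QR.star himp ζ y x := fun x y => (hζs x y) ▸ inf_le_right
  constructor
  · -- symmetric ⇒ ζs is a symmetric Q-map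
    intro h
    have hζseq : ∀ x y, ζs x y = ζ x y := by
      intro x y; rw [hζs x y, h x y, inf_idem]
    constructor
    · intro x x'
      have h1 := hζ.1 x x'
      unfold QR.comp at h1 ⊢
      refine h1.trans (le_of_eq ?_)
      apply iSup_congr
      intro y
      simp only [hζseq, h]
    · intro y y'
      unfold QR.comp
      apply iSup_le
      intro x
      calc ζs x y' * ζs x y ≤ ζ x y' * QR.star himp ζ y x :=
            hmul_le (hle1 x y') (hle2 x y)
        _ ≤ QR.id Y y y' := hadj x y y'
  · -- ζs symmetric Q-map ⇒ ζ symmetric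
    rintro ⟨hs1, _⟩
    intro x y
    have hs := hs1 x x
    have hid : QR.id X x x = (1 : Q) := by simp [QR.id]
    rw [hid] at hs
    unfold QR.comp at hs
    -- key: for any p combining via hs and a bound on each term
    have key : ∀ (p : Q) (bnd : Q),
        (∀ y' : Y, p * (ζs x y' * ζs x y') ≤ bnd) → p ≤ bnd := by
      intro p bnd hterm
      calc p = p * 1 := (mul_one p).symm
        _ ≤ p * (⨆ y', ζs x y' * ζs x y') := hmono p _ _ hs
        _ = ⨆ y', p * (ζs x y' * ζs x y') := hmul_iSup p _
        _ ≤ bnd := iSup_le hterm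
    apply le_antisymm
    · -- ζ*(y,x) ≤ ζ x y
      apply key
      intro y'
      have step : QR.star himp ζ y x * (ζs x y' * ζs x y') ≤ QR.id Y y y' * ζs x y' := by
        calc QR.star himp ζ y x * (ζs x y' * ζs x y')
            ≤ QR.star himp ζ y x * (ζ x y' * ζs x y') :=
              hmono _ _ _ (hmul_le (hle1 x y') le_rfl)
          _ = ζ x y' * (QR.star himp ζ y x * ζs x y') := mul_left_comm _ _ _
          _ = (ζ x y' * QR.star himp ζ y x) * ζs x y' := (mul_assoc _ _ _).symm
          _ ≤ QR.id Y y y' * ζs x y' := hmul_le (hadj x y y') le_rfl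
      refine step.trans ?_
      by_cases hyy : y = y'
      · subst hyy
        have hone : QR.id Y y y = (1 : Q) := by simp [QR.id]
        rw [hone, one_mul]
        exact hle1 x y
      · have hz : QR.id Y y y' = (⊥ : Q) := by simp [QR.id, hyy]
        rw [hz, hbot_mul]
        exact bot_le
    · -- ζ x y ≤ ζ*(y,x)
      apply key
      intro y'
      have step : ζ x y * (ζs x y' * ζs x y') ≤ QR.id Y y' y * ζs x y' := by
        calc ζ x y * (ζs x y' * ζs x y')
            ≤ ζ x y * (QR.star himp ζ y' x * ζs x y') :=
              hmono _ _ _ (hmul_le (hle2 x y') le_rfl)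
          _ = (ζ x y * QR.star himp ζ y' x) * ζs x y' := (mul_assoc _ _ _).symm
          _ ≤ QR.id Y y' y * ζs x y' := hmul_le (hadj x y' y) le_rfl
      refine step.trans ?_
      by_cases hyy : y' = y
      · subst hyy
        have hone : QR.id Y y' y' = (1 : Q) := by simp [QR.id]
        rw [hone, one_mul]
        exact hle2 x y'
      · have hz : QR.id Y y' y = (⊥ : Q) := by simp [QR.id, hyy]
        rw [hz, hbot_mul]
        exact bot_le
end
end

section
/- If Q is a lean quantale, then Q is weakly lean. -/
/-- `Q` is lean. -/
def IsLeanQuantale (Q : Type*) [CompleteLattice Q] [CommMonoid Q] : Prop :=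
  (∀ p q : Q, p ⊔ q = 1 → p * q = ⊥ → p = 1 ∨ q = 1) ∧
  (∀ p q : Q, p * q = 1 ↔ p = 1 ∧ q = 1)

/-- `Q` is weakly lean. -/
def IsWeaklyLeanQuantale (Q : Type*) [CompleteLattice Q] [CommMonoid Q] : Prop :=
  ∀ (I : Type) (p q : I → Q),
    (⨆ i, p i * q i) = 1 → (∀ i j, i ≠ j → p i * q j = ⊥) →
    1 ≤ ⨆ i, (p i ⊓ q i) * (p i ⊓ q i)

/-- every lean quantale is weakly lean. -/
theorem stmt6 {Q : Type*} [CompleteLattice Q] [CommMonoid Q]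
    (hbot : (⊥ : Q) < 1)
    (hdist : ∀ (p : Q) (s : Set Q), p * sSup s = ⨆ q ∈ s, p * q)
    (hlean : IsLeanQuantale Q) :
    IsWeaklyLeanQuantale Q := by
  intro I p q hsup hdisj
  classical
  have hmul_bot : ∀ x : Q, x * ⊥ = ⊥ := by
    intro x
    have := hdist x ∅
    simpa using this
  have hdist' : ∀ (x : Q) (f : I → Q), x * ⨆ i, f i = ⨆ i, x * f i := by
    intro x f
    rw [iSup, hdist, iSup_range]
  have hdist2 : ∀ (x : Q) (f : I → Q) (P : I → Prop),
      x * ⨆ i, ⨆ _ : P i, f i = ⨆ i, ⨆ _ : P i, x * f i := by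
    intro x f P
    rw [hdist']
    congr 1; ext i
    by_cases h : P i <;> simp [h, hmul_bot]
  by_cases h : ∃ i, p i * q i = 1
  · obtain ⟨i, hi⟩ := h
    obtain ⟨hp, hq⟩ := (hlean.2 _ _).1 hi
    have h1 : (p i ⊓ q i) * (p i ⊓ q i) = 1 := by rw [hp, hq]; simp
    calc (1:Q) = (p i ⊓ q i) * (p i ⊓ q i) := h1.symm
      _ ≤ _ := le_iSup (fun i => (p i ⊓ q i) * (p i ⊓ q i)) i
  · push_neg at h
    exfalso
    have hc : ∀ i, p i * q i = ⊥ := by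
      intro i
      have hsplit : (p i * q i) ⊔ (⨆ j, ⨆ _ : j ≠ i, p j * q j) = 1 := by
        rw [← iSup_split_single (fun j => p j * q j) i]
        exact hsup
      have hprod : (p i * q i) * (⨆ j, ⨆ _ : j ≠ i, p j * q j) = ⊥ := by
        rw [hdist2]
        apply le_bot_iff.mp
        apply iSup_le; intro j; apply iSup_le; intro hj
        have hre : (p i * q i) * (p j * q j) = (p i * q j) * (p j * q i) := by
          rw [mul_mul_mul_comm, mul_comm (q i), mul_mul_mul_comm]
        rw [hre, hdisj i j hj.symm, mul_comm, hmul_bot]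
      rcases hlean.1 _ _ hsplit hprod with h1 | hrest
      · exact absurd h1 (h i)
      · calc p i * q i = (p i * q i) * 1 := (mul_one _).symm
          _ = ⊥ := by rw [← hrest, hprod]
    simp only [hc, iSup_bot] at hsup
    exact hbot.ne hsup
end

section
/- If Q is an integral quantale (i.e., k = ⊤), then Q is weakly lean. -/
/-- every integral quantale (`k = ⊤`) is weakly lean. -/
theorem stmt7 {Q : Type*} [CompleteLattice Q] [CommMonoid Q]
    (hbot : (⊥ : Q) < 1)
    (hdist : ∀ (p : Q) (s : Set Q), p * sSup s = ⨆ q ∈ s, p * q)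
    (hint : (1 : Q) = ⊤) :
    IsWeaklyLeanQuantale Q := by
  intro I p q hsup hdisj
  have hbotmul : ∀ x : Q, x * ⊥ = ⊥ := by
    intro x
    simpa using hdist x ∅
  have hmono : ∀ x a b : Q, a ≤ b → x * a ≤ x * b := by
    intro x a b hab
    have h := hdist x {a, b}
    rw [sSup_pair, sup_eq_right.mpr hab, iSup_pair] at h
    exact le_sup_left.trans h.ge
  have hmono2 : ∀ a b c d : Q, a ≤ c → b ≤ d → a * b ≤ c * d := by
    intro a b c d h1 h2
    calc a * b ≤ a * d := hmono a b d h2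
      _ = d * a := mul_comm a d
      _ ≤ d * c := hmono d a c h1
      _ = c * d := mul_comm d c
  have hiSup : ∀ (x : Q) (f : I → Q), x * (⨆ i, f i) = ⨆ i, x * f i := by
    intro x f
    have h := hdist x (Set.range f)
    rw [sSup_range] at h
    rw [h, iSup_range]
  have hle1 : ∀ a : Q, a ≤ 1 := fun a => hint ▸ le_top
  have hmul_inf : ∀ a b : Q, a * b ≤ a ⊓ b := by
    intro a b
    refine le_inf ?_ ?_
    · calc a * b ≤ a * 1 := hmono a b 1 (hle1 b)
        _ = a := mul_one a
    · calc a * b = b * a := mul_comm a b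
        _ ≤ b * 1 := hmono b a 1 (hle1 a)
        _ = b := mul_one b
  have key : (1 : Q) = ⨆ i, ⨆ j, (p i * q i) * (p j * q j) := by
    calc (1 : Q) = (⨆ i, p i * q i) * (⨆ j, p j * q j) := by rw [hsup, one_mul]
      _ = ⨆ j, (⨆ i, p i * q i) * (p j * q j) := hiSup _ _
      _ = ⨆ j, ⨆ i, (p j * q j) * (p i * q i) := by
          refine iSup_congr fun j => ?_
          rw [mul_comm, hiSup]
      _ = ⨆ i, ⨆ j, (p i * q i) * (p j * q j) := rfl
  rw [key]
  refine iSup_le fun i => iSup_le fun j => ?_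
  by_cases hij : i = j
  · subst hij
    exact le_iSup_of_le i (hmono2 _ _ _ _ (hmul_inf _ _) (hmul_inf _ _))
  · have : (p i * q i) * (p j * q j) = (p i * q j) * (q i * p j) := by
      ac_rfl
    rw [this, hdisj i j hij, mul_comm, hbotmul]
    exact bot_le
end

section
/- Let Q be a non-trivial commutative unital quantale. Every Q-map between arbitrary sets is symmetric if and only if Q is weakly lean. -/
open Classical

noncomputable section

section Helpers

variable {Q : Type*} [CompleteLattice Q] [CommMonoid Q]

lemma qmul_mono_left (himp : Q → Q → Q)
    (hres : ∀ p q r : Q, p * q ≤ r ↔ p ≤ himp q r)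
    {a b : Q} (c : Q) (h : a ≤ b) : a * c ≤ b * c :=
  (hres a c (b * c)).2 (h.trans ((hres b c (b * c)).1 le_rfl))

lemma qmul_mono_right (himp : Q → Q → Q)
    (hres : ∀ p q r : Q, p * q ≤ r ↔ p ≤ himp q r)
    {a b : Q} (c : Q) (h : a ≤ b) : c * a ≤ c * b := by
  rw [mul_comm c a, mul_comm c b]; exact qmul_mono_left himp hres c h

lemma qmul_iSup (hdist : ∀ (p : Q) (s : Set Q), p * sSup s = ⨆ q ∈ s, p * q)
    {I : Sort*} (p : Q) (f : I → Q) : p * (⨆ i, f i) = ⨆ i, p * f i := by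
  rw [← sSup_range, hdist, iSup_range]

lemma qmul_bot (hdist : ∀ (p : Q) (s : Set Q), p * sSup s = ⨆ q ∈ s, p * q)
    (p : Q) : p * ⊥ = ⊥ := by
  have := hdist p ∅
  simpa using this

lemma star_mul_le (himp : Q → Q → Q)
    (hres : ∀ p q r : Q, p * q ≤ r ↔ p ≤ himp q r)
    {X Y : Type*} (ζ : X → Y → Q) (x : X) (y z : Y) :
    QR.star himp ζ y x * ζ x z ≤ QR.id Y y z :=
  (hres _ _ _).2 (iInf_le _ z)

lemma le_star (himp : Q → Q → Q)
    (hres : ∀ p q r : Q, p * q ≤ r ↔ p ≤ himp q r)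
    {X Y : Type*} (ζ : X → Y → Q) {a : Q} {x : X} {y : Y}
    (h : ∀ z, a * ζ x z ≤ QR.id Y y z) : a ≤ QR.star himp ζ y x :=
  le_iInf fun z => (hres _ _ _).1 (h z)

end Helpers

/-- every `Q`-map between arbitrary sets is symmetric iff `Q` is weakly lean. -/
theorem stmt8 {Q : Type*} [CompleteLattice Q] [CommMonoid Q]
    (hbot : (⊥ : Q) < 1)
    (hdist : ∀ (p : Q) (s : Set Q), p * sSup s = ⨆ q ∈ s, p * q)
    (himp : Q → Q → Q)
    (hres : ∀ p q r : Q, p * q ≤ r ↔ p ≤ himp q r) :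
    (∀ (X Y : Type) (ζ : X → Y → Q), QR.IsMap himp ζ →
      ∀ (x : X) (y : Y), QR.star himp ζ y x = ζ x y) ↔
    IsWeaklyLeanQuantale Q := by
  constructor
  · -- every map symmetric → weakly lean
    intro hsym I p q h1 h2
    -- from the hypotheses on a pair (f, g) we deduce f i ≤ g i for all i
    have key : ∀ (f g : I → Q), (⨆ i, f i * g i) = 1 →
        (∀ i j, i ≠ j → f i * g j = ⊥) → ∀ i, f i ≤ g i := by
      intro f g hfg horth i
      set ζ : PUnit → I → Q := fun _ j => g j with hζ
      have hle : ∀ (x : PUnit) (j : I), f j ≤ QR.star himp ζ j x := by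
        intro x j
        refine le_star himp hres ζ (fun z => ?_)
        by_cases hjz : j = z
        · subst hjz
          simp only [QR.id, if_pos rfl]
          exact le_of_le_of_eq (le_iSup (fun i => f i * g i) j) hfg
        · simp only [QR.id, if_neg hjz]
          exact le_of_eq (horth j z hjz)
      have hmap : QR.IsMap himp ζ := by
        constructor
        · intro x x'
          have hge : (1 : Q) ≤ QR.comp (QR.star himp ζ) ζ x x' := by
            calc (1 : Q) = ⨆ j, f j * g j := hfg.symm
              _ ≤ ⨆ j, QR.star himp ζ j x' * ζ x j :=
                iSup_mono fun j => qmul_mono_left himp hres _ (hle x' j)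
          refine le_trans ?_ hge
          simp only [QR.id]
          split <;> simp
        · intro y y'
          refine iSup_le fun x => ?_
          rw [mul_comm]
          exact star_mul_le himp hres ζ x y y'
      have := hsym PUnit I ζ hmap PUnit.unit i
      calc f i ≤ QR.star himp ζ i PUnit.unit := hle PUnit.unit i
        _ = g i := this
    have hpq : ∀ i, p i ≤ q i := key p q h1 h2
    have hqp : ∀ i, q i ≤ p i := by
      refine key q p ?_ ?_
      · rw [← h1]; exact iSup_congr fun i => mul_comm _ _
      · intro i j hij
        rw [mul_comm]
        exact h2 j i (Ne.symm hij)
    have heq : ∀ i, p i = q i := fun i => le_antisymm (hpq i) (hqp i)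
    calc (1 : Q) = ⨆ i, p i * q i := h1.symm
      _ ≤ ⨆ i, (p i ⊓ q i) * (p i ⊓ q i) := by
        refine iSup_mono fun i => ?_
        simp [heq i, inf_idem]
  · -- weakly lean → every map symmetric
    intro hwl X Y ζ hmap x y
    have hmix : ∀ y' z : Y, QR.star himp ζ y' x * ζ x z ≤ QR.id Y y' z :=
      fun y' z => star_mul_le himp hres ζ x y' z
    have hdiag : ∀ y' : Y, QR.star himp ζ y' x * ζ x y' ≤ 1 := by
      intro y'
      simpa [QR.id] using hmix y' y'
    have h1 : (⨆ y', QR.star himp ζ y' x * ζ x y') = 1 := by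
      apply le_antisymm
      · exact iSup_le fun y' => hdiag y'
      · have := hmap.1 x x
        simpa [QR.id, QR.comp] using this
    have h2 : ∀ y' z : Y, y' ≠ z → QR.star himp ζ y' x * ζ x z = ⊥ := by
      intro y' z hne
      refine le_bot_iff.1 ?_
      have := hmix y' z
      simpa [QR.id, if_neg hne] using this
    set s : Y → Q := fun y' => QR.star himp ζ y' x ⊓ ζ x y' with hs
    have hkey : (1 : Q) ≤ ⨆ y', s y' * s y' :=
      hwl Y (fun y' => QR.star himp ζ y' x) (fun y' => ζ x y') h1 h2
    have hsl : ∀ y', s y' ≤ QR.star himp ζ y' x := fun y' => inf_le_left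
    have hsr : ∀ y', s y' ≤ ζ x y' := fun y' => inf_le_right
    -- generic bounding lemma
    have main : ∀ a b : Q, (∀ y', y' ≠ y → a * s y' ≤ ⊥) → s y ≤ b → a * b ≤ 1 →
        a ≤ b := by
      intro a b hao hsb hab
      calc a = a * 1 := (mul_one a).symm
        _ ≤ a * ⨆ y', s y' * s y' := qmul_mono_right himp hres a hkey
        _ = ⨆ y', a * (s y' * s y') := qmul_iSup hdist a _
        _ ≤ b := by
          refine iSup_le fun y' => ?_
          by_cases hy : y' = y
          · subst hy
            have hbb : s y' * s y' ≤ b * b :=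
              le_trans (qmul_mono_left himp hres _ hsb) (qmul_mono_right himp hres b hsb)
            calc a * (s y' * s y') ≤ a * (b * b) := qmul_mono_right himp hres a hbb
              _ = (a * b) * b := (mul_assoc a b b).symm
              _ ≤ 1 * b := qmul_mono_left himp hres b hab
              _ = b := one_mul b
          · calc a * (s y' * s y') = (a * s y') * s y' := (mul_assoc _ _ _).symm
              _ ≤ ⊥ * s y' := qmul_mono_left himp hres _ (hao y' hy)
              _ = s y' * ⊥ := mul_comm _ _
              _ = ⊥ := qmul_bot hdist _
              _ ≤ b := bot_le
    apply le_antisymm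
    · refine main (QR.star himp ζ y x) (ζ x y) ?_ (hsr y) (hdiag y)
      intro y' hy
      calc QR.star himp ζ y x * s y' ≤ QR.star himp ζ y x * ζ x y' :=
          qmul_mono_right himp hres _ (hsr y')
        _ = ⊥ := h2 y y' (Ne.symm hy)
    · refine main (ζ x y) (QR.star himp ζ y x) ?_ (hsl y) ?_
      · intro y' hy
        calc ζ x y * s y' ≤ ζ x y * QR.star himp ζ y' x :=
            qmul_mono_right himp hres _ (hsl y')
          _ = QR.star himp ζ y' x * ζ x y := mul_comm _ _
          _ = ⊥ := h2 y' y hy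
      · rw [mul_comm]
        exact hdiag y
end
end

section
/- If Q is weakly lean, then for any Q-maps ζ, η : X ⇸ Y between the same sets, ζ ≤ η (pointwise) implies ζ = η. -/
open Classical

noncomputable section

/-- if `Q` is weakly lean, then for `Q`-maps `ζ, η : X ⇸ Y`,
`ζ ≤ η` implies `ζ = η`. -/
theorem stmt9 {Q : Type*} [CompleteLattice Q] [CommMonoid Q]
    (hbot : (⊥ : Q) < 1)
    (hdist : ∀ (p : Q) (s : Set Q), p * sSup s = ⨆ q ∈ s, p * q)
    (himp : Q → Q → Q)
    (hres : ∀ p q r : Q, p * q ≤ r ↔ p ≤ himp q r)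
    (hwl : IsWeaklyLeanQuantale Q)
    {X Y : Type} (ζ η : X → Y → Q)
    (hζ : QR.IsMap himp ζ) (hη : QR.IsMap himp η)
    (hle : ∀ (x : X) (y : Y), ζ x y ≤ η x y) :
    ζ = η := by
  -- basic multiplicative monotonicity from residuation
  have hmul : ∀ {p q : Q} (r : Q), p ≤ q → p * r ≤ q * r := by
    intro p q r h
    exact (hres p r (q * r)).mpr (h.trans ((hres q r (q * r)).mp le_rfl))
  have hmul' : ∀ {p q : Q} (r : Q), p ≤ q → r * p ≤ r * q := by
    intro p q r h
    rw [mul_comm r p, mul_comm r q]; exact hmul r h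
  have hbotmul : ∀ r : Q, (⊥ : Q) * r = ⊥ := fun r =>
    le_antisymm ((hres _ _ _).mpr bot_le) bot_le
  have hsup : ∀ {I : Type} (p : Q) (f : I → Q), p * (⨆ i, f i) = ⨆ i, p * f i := by
    intro I p f
    rw [iSup, hdist, iSup_range]
  have hsup' : ∀ {I : Type} (f : I → Q) (p : Q), (⨆ i, f i) * p = ⨆ i, f i * p := by
    intro I f p
    rw [mul_comm, hsup]
    exact iSup_congr fun i => mul_comm _ _
  -- the fundamental property of star: θ*(y,x) * θ(x,z) ≤ id(y,z)
  have hstar : ∀ (θ : X → Y → Q) (x : X) (y z : Y),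
      QR.star himp θ y x * θ x z ≤ QR.id Y y z := by
    intro θ x y z
    exact (hres _ _ _).mpr (iInf_le (fun z' => himp (θ x z') (QR.id Y y z')) z)
  have hid_eq : ∀ y : Y, QR.id Y y y = (1 : Q) := fun y => by simp [QR.id]
  have hid_ne : ∀ {y z : Y}, y ≠ z → QR.id Y y z = (⊥ : Q) := fun {y z} h => by
    simp [QR.id, h]
  -- weak leanness applied to a map θ
  have hWL : ∀ (θ : X → Y → Q),
      (∀ x x', QR.id X x x' ≤ QR.comp (QR.star himp θ) θ x x') → ∀ x : X,
      (1 : Q) ≤ ⨆ y, (QR.star himp θ y x ⊓ θ x y) * (QR.star himp θ y x ⊓ θ x y) := by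
    intro θ htot x
    apply hwl Y (fun y => QR.star himp θ y x) (fun y => θ x y)
    · apply le_antisymm
      · exact iSup_le fun y => (hstar θ x y y).trans (hid_eq y).le
      · have h := htot x x
        simpa [QR.id, QR.comp] using h
    · intro i j hij
      exact le_antisymm ((hstar θ x i j).trans (hid_ne hij).le) bot_le
  -- key lemma: ζ* is also a "right adjoint" to η
  have hG : ∀ (x : X) (y z : Y), QR.star himp ζ y x * η x z ≤ QR.id Y y z := by
    intro x y z
    set a : Y → Q := fun w => QR.star himp ζ w x ⊓ ζ x w with ha
    set c : Y → Q := fun v => QR.star himp η v x ⊓ η x v with hc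
    have S1 : (1 : Q) ≤ ⨆ w, a w * a w := hWL ζ hζ.1 x
    have S2 : (1 : Q) ≤ ⨆ v, c v * c v := hWL η hη.1 x
    set P : Q := QR.star himp ζ y x * η x z with hP
    have term : ∀ w v : Y, a w * a w * (c v * c v * P) ≤ QR.id Y y z := by
      intro w v
      by_cases hwy : w = y
      · -- y is eliminated, replaced by w
        subst hwy
        by_cases hvz : v = z
        · -- z eliminated, replaced by v
          subst hvz
          by_cases hyz : w = v
          · -- v eliminated, replaced by w
            subst hyz
            rw [hid_eq]
            have f1 : QR.star himp ζ w x * a w ≤ 1 := by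
              calc QR.star himp ζ w x * a w ≤ QR.star himp ζ w x * ζ x w :=
                    hmul' _ inf_le_right
                _ ≤ 1 := (hstar ζ x w w).trans (hid_eq w).le
            have f2 : η x w * c w ≤ 1 := by
              calc η x w * c w ≤ η x w * QR.star himp η w x := hmul' _ inf_le_left
                _ = QR.star himp η w x * η x w := mul_comm _ _
                _ ≤ 1 := (hstar η x w w).trans (hid_eq w).le
            have f3 : a w * c w ≤ 1 := by
              calc a w * c w ≤ η x w * QR.star himp η w x := by
                    have h1 : a w ≤ η x w := inf_le_right.trans (hle x w)
                    exact (hmul _ h1).trans (hmul' _ inf_le_left)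
                _ = QR.star himp η w x * η x w := mul_comm _ _
                _ ≤ 1 := (hstar η x w w).trans (hid_eq w).le
            have e : a w * a w * (c w * c w * P)
                = (QR.star himp ζ w x * a w) * ((η x w * c w) * (a w * c w)) := by
              rw [hP]; ac_rfl
            rw [e]
            calc (QR.star himp ζ w x * a w) * ((η x w * c w) * (a w * c w))
                ≤ 1 * ((η x w * c w) * (a w * c w)) := hmul _ f1
              _ = (η x w * c w) * (a w * c w) := one_mul _
              _ ≤ 1 * (a w * c w) := hmul _ f2
              _ = a w * c w := one_mul _
              _ ≤ 1 := f3
          · -- w ≠ v : use a w * c v ≤ ⊥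
            have hbad : a w * c v ≤ ⊥ := by
              calc a w * c v ≤ η x w * QR.star himp η v x := by
                    have h1 : a w ≤ η x w := inf_le_right.trans (hle x w)
                    exact (hmul _ h1).trans (hmul' _ inf_le_left)
                _ = QR.star himp η v x * η x w := mul_comm _ _
                _ ≤ QR.id Y v w := hstar η x v w
                _ = ⊥ := hid_ne (fun h => hyz h.symm)
            have e : a w * a w * (c v * c v * P)
                = (a w * c v) * (a w * (c v * P)) := by ac_rfl
            rw [e]
            calc (a w * c v) * (a w * (c v * P)) ≤ ⊥ * (a w * (c v * P)) := hmul _ hbad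
              _ = ⊥ := hbotmul _
              _ ≤ QR.id Y w v := bot_le
        · -- v ≠ z : use η x z * c v ≤ ⊥
          have hbad : η x z * c v ≤ ⊥ := by
            calc η x z * c v ≤ η x z * QR.star himp η v x := hmul' _ inf_le_left
              _ = QR.star himp η v x * η x z := mul_comm _ _
              _ ≤ QR.id Y v z := hstar η x v z
              _ = ⊥ := hid_ne hvz
          have e : a w * a w * (c v * c v * P)
              = (η x z * c v) * (a w * (a w * (c v * QR.star himp ζ w x))) := by
            rw [hP]; ac_rfl
          rw [e]
          calc (η x z * c v) * (a w * (a w * (c v * QR.star himp ζ w x)))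
              ≤ ⊥ * (a w * (a w * (c v * QR.star himp ζ w x))) := hmul _ hbad
            _ = ⊥ := hbotmul _
            _ ≤ QR.id Y w z := bot_le
      · -- w ≠ y : use ζ* y x * a w ≤ ⊥
        have hbad : QR.star himp ζ y x * a w ≤ ⊥ := by
          calc QR.star himp ζ y x * a w ≤ QR.star himp ζ y x * ζ x w :=
                hmul' _ inf_le_right
            _ ≤ QR.id Y y w := hstar ζ x y w
            _ = ⊥ := hid_ne (fun h => hwy h.symm)
        have e : a w * a w * (c v * c v * P)
            = (QR.star himp ζ y x * a w) * (a w * (c v * (c v * η x z))) := by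
          rw [hP]; ac_rfl
        rw [e]
        calc (QR.star himp ζ y x * a w) * (a w * (c v * (c v * η x z)))
            ≤ ⊥ * (a w * (c v * (c v * η x z))) := hmul _ hbad
          _ = ⊥ := hbotmul _
          _ ≤ QR.id Y y z := bot_le
    calc P = 1 * (1 * P) := by rw [one_mul, one_mul]
      _ ≤ (⨆ w, a w * a w) * ((⨆ v, c v * c v) * P) :=
          (hmul _ S1).trans (hmul' _ (hmul _ S2))
      _ = ⨆ w, a w * a w * ((⨆ v, c v * c v) * P) := hsup' _ _
      _ = ⨆ w, ⨆ v, a w * a w * (c v * c v * P) := by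
          refine iSup_congr fun w => ?_
          rw [hsup' (fun v => c v * c v) P, hsup]
      _ ≤ QR.id Y y z := iSup_le fun w => iSup_le fun v => term w v
  -- conclude
  funext x y
  refine le_antisymm (hle x y) ?_
  have htot : (1 : Q) ≤ ⨆ w, QR.star himp ζ w x * ζ x w := by
    have h := hζ.1 x x
    simpa [QR.id, QR.comp] using h
  calc η x y = η x y * 1 := (mul_one _).symm
    _ ≤ η x y * (⨆ w, QR.star himp ζ w x * ζ x w) := hmul' _ htot
    _ = ⨆ w, η x y * (QR.star himp ζ w x * ζ x w) := hsup _ _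
    _ ≤ ζ x y := by
        refine iSup_le fun w => ?_
        have e : η x y * (QR.star himp ζ w x * ζ x w)
            = (QR.star himp ζ w x * η x y) * ζ x w := by ac_rfl
        rw [e]
        by_cases hwy : w = y
        · subst hwy
          calc (QR.star himp ζ w x * η x w) * ζ x w
              ≤ QR.id Y w w * ζ x w := hmul _ (hG x w w)
            _ = 1 * ζ x w := by rw [hid_eq]
            _ = ζ x w := one_mul _
        · calc (QR.star himp ζ w x * η x y) * ζ x w
              ≤ QR.id Y w y * ζ x w := hmul _ (hG x w y)
            _ = ⊥ * ζ x w := by rw [hid_ne hwy]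
            _ = ⊥ := hbotmul _
            _ ≤ ζ x y := bot_le
end
end

section
/- Let Q be a non-trivial commutative unital quantale. Every Q-map ζ : X ⇸ Y between arbitrary sets is the graph of a map in Set (i.e., there exists a function f : X → Y with ζ = f_∘) if and only if Q is lean. -/
open Classical

noncomputable section

/-- The graph of a function `f : X → Y`: `k` where `y = f x` and `⊥` elsewhere. -/
def QR.graph {Q : Type*} [CompleteLattice Q] [One Q] {X Y : Type*} (f : X → Y) :
    X → Y → Q :=
  fun x y => if y = f x then 1 else ⊥

section Helpers
variable {Q : Type*} [CompleteLattice Q] [CommMonoid Q]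
  (hdist : ∀ (p : Q) (s : Set Q), p * sSup s = ⨆ q ∈ s, p * q)
  (himp : Q → Q → Q)
  (hres : ∀ p q r : Q, p * q ≤ r ↔ p ≤ himp q r)

include hdist in
lemma my_mul_iSup {ι : Sort*} (p : Q) (f : ι → Q) : p * (⨆ i, f i) = ⨆ i, p * f i := by
  rw [← sSup_range, hdist, iSup_range]

include hdist in
lemma my_mul_bot (p : Q) : p * (⊥ : Q) = ⊥ := by
  have := hdist p ∅; simpa using this

include hdist in
lemma my_mul_sup (p a b : Q) : p * (a ⊔ b) = p * a ⊔ p * b := by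
  have h := my_mul_iSup hdist p (fun b' : Bool => bif b' then a else b)
  simp only [iSup_bool_eq, cond_true, cond_false] at h
  exact h

include hdist in
lemma my_mul_le_mul_left {a b : Q} (p : Q) (h : a ≤ b) : p * a ≤ p * b := by
  have : p * a ⊔ p * b = p * b := by rw [← my_mul_sup hdist, sup_eq_right.2 h]
  exact le_sup_left.trans this.le

include hdist in
lemma my_mul_le_mul {a b c d : Q} (h1 : a ≤ b) (h2 : c ≤ d) : a * c ≤ b * d :=
  (my_mul_le_mul_left hdist a h2).trans
    (by rw [mul_comm a d, mul_comm b d]; exact my_mul_le_mul_left hdist d h1)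

include hres in
lemma my_himp_mul_le (q r : Q) : himp q r * q ≤ r := (hres _ _ _).2 le_rfl

include hdist hres in
/-- The second Q-map condition holds automatically. -/
lemma my_comp_star_le {X Y : Type*} (ζ : X → Y → Q) (y y' : Y) :
    QR.comp ζ (QR.star himp ζ) y y' ≤ QR.id Y y y' := by
  refine iSup_le fun x => ?_
  have h1 : QR.star himp ζ y x ≤ himp (ζ x y') (QR.id Y y y') := iInf_le _ y'
  calc ζ x y' * QR.star himp ζ y x
      ≤ ζ x y' * himp (ζ x y') (QR.id Y y y') := my_mul_le_mul_left hdist _ h1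
    _ = himp (ζ x y') (QR.id Y y y') * ζ x y' := mul_comm _ _
    _ ≤ QR.id Y y y' := my_himp_mul_le himp hres _ _

end Helpers

/-- every `Q`-map between arbitrary sets is the graph of a map in `Set`
iff `Q` is lean. -/
theorem stmt10 {Q : Type*} [CompleteLattice Q] [CommMonoid Q]
    (hbot : (⊥ : Q) < 1)
    (hdist : ∀ (p : Q) (s : Set Q), p * sSup s = ⨆ q ∈ s, p * q)
    (himp : Q → Q → Q)
    (hres : ∀ p q r : Q, p * q ≤ r ↔ p ≤ himp q r) :
    (∀ (X Y : Type) (ζ : X → Y → Q), QR.IsMap himp ζ →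
      ∃ f : X → Y, ζ = QR.graph f) ↔
    IsLeanQuantale Q := by
  constructor
  · intro H
    have part2 : ∀ p q : Q, p * q = 1 → q = 1 := by
      intro p q hpq
      set ζ : PUnit → PUnit → Q := fun _ _ => q with hζ
      have hstar : ∀ y x : PUnit, QR.star himp ζ y x = himp q 1 := by
        intro y x
        simp [QR.star, QR.id, hζ, eq_iff_true_of_subsingleton]
      have hmap : QR.IsMap himp ζ := by
        refine ⟨?_, my_comp_star_le hdist himp hres ζ⟩
        intro x x'
        have hp : p ≤ himp q 1 := (hres p q 1).1 hpq.le
        have hone : (1 : Q) ≤ himp q 1 * q := by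
          calc (1 : Q) = p * q := hpq.symm
            _ ≤ himp q 1 * q := my_mul_le_mul hdist hp le_rfl
        refine le_trans ?_ (le_iSup _ PUnit.unit)
        rw [hstar]
        refine le_trans ?_ hone
        simp [QR.id, eq_iff_true_of_subsingleton]
      obtain ⟨f, hf⟩ := H PUnit PUnit ζ hmap
      have := congrFun (congrFun hf PUnit.unit) PUnit.unit
      simpa [QR.graph, hζ, eq_iff_true_of_subsingleton] using this
    have part2' : ∀ p q : Q, p * q = 1 ↔ p = 1 ∧ q = 1 := by
      intro p q
      constructor
      · intro h
        exact ⟨part2 q p (by rwa [mul_comm] at h), part2 p q h⟩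
      · rintro ⟨rfl, rfl⟩; exact one_mul 1
    refine ⟨?_, part2'⟩
    intro p q hsup hprod
    have hp1 : p ≤ 1 := le_sup_left.trans hsup.le
    have hq1 : q ≤ 1 := le_sup_right.trans hsup.le
    set ζ : PUnit → Bool → Q := fun _ b => bif b then p else q with hζ
    have hmap : QR.IsMap himp ζ := by
      refine ⟨?_, my_comp_star_le hdist himp hres ζ⟩
      intro x x'
      have hstT : p ≤ QR.star himp ζ true x' := by
        refine le_iInf fun z => ?_
        cases z
        · refine (hres _ _ _).1 ?_
          show p * q ≤ QR.id Bool true false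
          simp [QR.id, hprod]
        · refine (hres _ _ _).1 ?_
          show p * p ≤ QR.id Bool true true
          simp only [QR.id, if_pos rfl]
          calc p * p ≤ 1 * 1 := my_mul_le_mul hdist hp1 hp1
            _ = 1 := one_mul 1
      have hstF : q ≤ QR.star himp ζ false x' := by
        refine le_iInf fun z => ?_
        cases z
        · refine (hres _ _ _).1 ?_
          show q * q ≤ QR.id Bool false false
          simp only [QR.id, if_pos rfl]
          calc q * q ≤ 1 * 1 := my_mul_le_mul hdist hq1 hq1
            _ = 1 := one_mul 1
        · refine (hres _ _ _).1 ?_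
          show q * p ≤ QR.id Bool false true
          simp [QR.id, mul_comm q p, hprod]
      have hone : (1 : Q) = p * p ⊔ q * q := by
        have h1 : (1 : Q) = (p ⊔ q) * (p ⊔ q) := by rw [hsup, one_mul]
        rw [my_mul_sup hdist, mul_comm (p ⊔ q) p, mul_comm (p ⊔ q) q,
          my_mul_sup hdist, my_mul_sup hdist] at h1
        rw [h1, hprod, mul_comm q p, hprod]
        simp
      have hle : (1 : Q) ≤ ⨆ b, QR.star himp ζ b x' * ζ x b := by
        rw [hone]
        refine sup_le ?_ ?_
        · refine le_trans ?_ (le_iSup _ true)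
          exact my_mul_le_mul hdist hstT le_rfl
        · refine le_trans ?_ (le_iSup _ false)
          exact my_mul_le_mul hdist hstF le_rfl
      refine le_trans ?_ hle
      simp [QR.id, eq_iff_true_of_subsingleton]
    obtain ⟨f, hf⟩ := H PUnit Bool ζ hmap
    have hT := congrFun (congrFun hf PUnit.unit) true
    have hF := congrFun (congrFun hf PUnit.unit) false
    cases hfu : f PUnit.unit with
    | true =>
      left
      simpa [QR.graph, hζ, hfu] using hT
    | false =>
      right
      simpa [QR.graph, hζ, hfu] using hF
  · intro hlean X Y ζ hζ
    have hcross : ∀ (x : X) (y y' : Y), y' ≠ y → ζ x y * QR.star himp ζ y' x = ⊥ := by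
      intro x y y' hne
      have h2 := hζ.2 y' y
      have h3 : ζ x y * QR.star himp ζ y' x ≤ QR.id Y y' y :=
        le_trans (le_iSup (fun x'' => ζ x'' y * QR.star himp ζ y' x'') x) h2
      rw [QR.id, if_neg hne] at h3
      exact le_bot_iff.1 h3
    have key : ∀ x : X, ∃ y : Y, QR.star himp ζ y x * ζ x y = 1 := by
      intro x
      set a : Y → Q := fun y => QR.star himp ζ y x * ζ x y with ha
      have hle1 : ∀ y, a y ≤ 1 := by
        intro y
        have h2 := hζ.2 y y
        have h3 : ζ x y * QR.star himp ζ y x ≤ QR.id Y y y :=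
          le_trans (le_iSup (fun x'' => ζ x'' y * QR.star himp ζ y x'') x) h2
        rw [QR.id, if_pos rfl] at h3
        calc a y = ζ x y * QR.star himp ζ y x := mul_comm _ _
          _ ≤ 1 := h3
      have hsup : (⨆ y, a y) = 1 := by
        refine le_antisymm (iSup_le hle1) ?_
        have h1 := hζ.1 x x
        rw [QR.id, if_pos rfl] at h1
        exact h1
      by_contra hno
      push_neg at hno
      have hprodall : ∀ y : Y, a y * (⨆ y' : {y' : Y // y' ≠ y}, a y') = ⊥ := by
        intro y
        rw [my_mul_iSup hdist]
        refine le_bot_iff.1 (iSup_le ?_)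
        rintro ⟨y', hy'⟩
        have hkey : ζ x y * QR.star himp ζ y' x = ⊥ := hcross x y y' hy'
        have heq : a y * a y' =
            (ζ x y * QR.star himp ζ y' x) * (QR.star himp ζ y x * ζ x y') := by
          show (QR.star himp ζ y x * ζ x y) * (QR.star himp ζ y' x * ζ x y') = _
          rw [mul_comm (QR.star himp ζ y x) (ζ x y), mul_mul_mul_comm]
        calc a y * a y' = (ζ x y * QR.star himp ζ y' x) * (QR.star himp ζ y x * ζ x y') :=
            heq
          _ = ⊥ := by rw [hkey, mul_comm, my_mul_bot hdist]
          _ ≤ ⊥ := le_rfl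
      have hb : ∀ y : Y, (⨆ y' : {y' : Y // y' ≠ y}, a y') = 1 := by
        intro y
        have hsup2 : a y ⊔ (⨆ y' : {y' : Y // y' ≠ y}, a y') = 1 := by
          refine le_antisymm ?_ ?_
          · rw [← hsup]
            refine sup_le (le_iSup a y) (iSup_le ?_)
            rintro ⟨y', _⟩; exact le_iSup a y'
          · rw [← hsup]
            refine iSup_le fun y' => ?_
            by_cases h : y' = y
            · subst h; exact le_sup_left
            · exact le_trans (le_iSup (fun z : {z : Y // z ≠ y} => a z.1) ⟨y', h⟩)
                le_sup_right
        rcases hlean.1 _ _ hsup2 (hprodall y) with h | h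
        · exact absurd h (hno y)
        · exact h
      have habot : ∀ y, a y = ⊥ := by
        intro y
        have h := hprodall y
        rw [hb y, mul_one] at h
        exact h
      have hcontra : (1 : Q) = ⊥ := by
        rw [← hsup]
        exact le_antisymm (iSup_le fun y => (habot y).le) bot_le
      exact (hbot.ne hcontra.symm).elim
    choose f hfspec using key
    refine ⟨f, ?_⟩
    funext x y
    have h1 := (hlean.2 _ _).1 (hfspec x)
    rw [QR.graph]
    by_cases h : y = f x
    · subst h; rw [if_pos rfl]; exact h1.2
    · rw [if_neg h]
      have hc := hcross x y (f x) (Ne.symm h)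
      calc ζ x y = ζ x y * QR.star himp ζ (f x) x := by rw [h1.1, mul_one]
        _ = ⊥ := hc
end
end

section
/- Let Q be a non-trivial commutative integral quantale (k = ⊤). Then every Q-map between arbitrary sets is the graph of a map in Set if and only if for all p, q ∈ Q: (p ∨ q = ⊤ and p & q = ⊥) implies (p = ⊤ or q = ⊤). -/
open Classical

noncomputable section

/-- for a non-trivial commutative integral quantale (`k = ⊤`), every
`Q`-map between arbitrary sets is the graph of a map in `Set` iff
`(p ⊔ q = ⊤ and p & q = ⊥) → (p = ⊤ or q = ⊤)` for all `p, q`. -/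
theorem stmt11 {Q : Type*} [CompleteLattice Q] [CommMonoid Q]
    (hbot : (⊥ : Q) < 1)
    (hdist : ∀ (p : Q) (s : Set Q), p * sSup s = ⨆ q ∈ s, p * q)
    (himp : Q → Q → Q)
    (hres : ∀ p q r : Q, p * q ≤ r ↔ p ≤ himp q r)
    (hint : (1 : Q) = ⊤) :
    (∀ (X Y : Type) (ζ : X → Y → Q), QR.IsMap himp ζ →
      ∃ f : X → Y, ζ = QR.graph f) ↔
    (∀ p q : Q, p ⊔ q = ⊤ → p * q = ⊥ → p = ⊤ ∨ q = ⊤) := by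
  have htop : (⊤ : Q) = 1 := hint.symm
  have hle1 : ∀ a : Q, a ≤ 1 := fun a => hint ▸ le_top
  have hmul_iSup : ∀ (c : Q) {ι : Type} (f : ι → Q), c * (⨆ i, f i) = ⨆ i, c * f i := by
    intro c ι f
    rw [iSup, hdist c (Set.range f), iSup_range]
  have hmul_sup : ∀ c a b : Q, c * (a ⊔ b) = c * a ⊔ c * b := by
    intro c a b
    have h := hdist c {a, b}
    rw [sSup_pair] at h
    rw [h, iSup_pair]
  have hmono : ∀ c a b : Q, a ≤ b → c * a ≤ c * b := by
    intro c a b hab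
    have h : c * b = c * a ⊔ c * b := by
      rw [← hmul_sup, sup_eq_right.2 hab]
    rw [h]; exact le_sup_left
  have hmul_le_right : ∀ a b : Q, a * b ≤ b := by
    intro a b
    calc a * b = b * a := mul_comm _ _
    _ ≤ b * 1 := hmono _ _ _ (hle1 a)
    _ = b := mul_one b
  have hmul_le_left : ∀ a b : Q, a * b ≤ a := fun a b => (mul_comm a b) ▸ hmul_le_right b a
  have hmul_le_mul : ∀ a a' b b' : Q, a ≤ a' → b ≤ b' → a * b ≤ a' * b' := by
    intro a a' b b' h1 h2
    calc a * b ≤ a * b' := hmono _ _ _ h2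
    _ = b' * a := mul_comm _ _
    _ ≤ b' * a' := hmono _ _ _ h1
    _ = a' * b' := mul_comm _ _
  have htop_mul : ∀ a : Q, ⊤ * a = a := fun a => by rw [htop, one_mul]
  constructor
  · -- every Q-map is a graph → lattice property
    intro H p q hsup hpq
    by_contra hcon
    push_neg at hcon
    obtain ⟨hp, hq⟩ := hcon
    set ζ : PUnit → Bool → Q := fun _ b => if b then q else p with hζdef
    have hidem : ∀ a b : Q, a ⊔ b = ⊤ → a * b = ⊥ → a * a = a := by
      intro a b h1 h2
      have h : a * (a ⊔ b) = a := by rw [h1, htop, mul_one]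
      rw [hmul_sup, h2, sup_bot_eq] at h
      exact h
    have hpp : p * p = p := hidem p q hsup hpq
    have hqq : q * q = q := hidem q p (by rwa [sup_comm]) (by rwa [mul_comm])
    have hcompl : ∀ a b : Q, a ⊔ b = ⊤ → a * b = ⊥ → himp b ⊥ = a := by
      intro a b h1 h2
      apply le_antisymm
      · have hb : himp b ⊥ * b ≤ ⊥ := (hres _ _ _).2 le_rfl
        have h3 : himp b ⊥ * (a ⊔ b) = himp b ⊥ := by rw [h1, htop, mul_one]
        rw [hmul_sup] at h3
        calc himp b ⊥ = himp b ⊥ * a ⊔ himp b ⊥ * b := h3.symm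
        _ ≤ a ⊔ ⊥ := sup_le_sup (hmul_le_right _ _) hb
        _ = a := sup_bot_eq _
      · exact (hres _ _ _).1 h2.le
    have himp_one : ∀ a : Q, himp a 1 = ⊤ :=
      fun a => le_antisymm le_top ((hres _ _ _).1 (hle1 _))
    have eid1 : ∀ y : Bool, QR.id Bool y y = (1 : Q) := fun y => if_pos rfl
    have eid0 : ∀ y z : Bool, y ≠ z → QR.id Bool y z = (⊥ : Q) := fun y z h => if_neg h
    have hnegq : himp q ⊥ = p := hcompl p q hsup hpq
    have hnegp : himp p ⊥ = q := hcompl q p (by rwa [sup_comm]) (by rwa [mul_comm])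
    have hst_t : ∀ u : PUnit, QR.star himp ζ true u = q := by
      intro u
      show (⨅ z : Bool, himp (ζ u z) (QR.id Bool true z)) = q
      rw [iInf_bool_eq, eid1, eid0 true false (by simp)]
      show himp q 1 ⊓ himp p ⊥ = q
      rw [himp_one, hnegp, top_inf_eq]
    have hst_f : ∀ u : PUnit, QR.star himp ζ false u = p := by
      intro u
      show (⨅ z : Bool, himp (ζ u z) (QR.id Bool false z)) = p
      rw [iInf_bool_eq, eid1, eid0 false true (by simp)]
      show himp q ⊥ ⊓ himp p 1 = p
      rw [hnegq, himp_one, inf_top_eq]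
    have hmap : QR.IsMap himp ζ := by
      constructor
      · intro x x'
        have hxx : x = x' := Subsingleton.elim _ _
        subst hxx
        show QR.id PUnit x x ≤ ⨆ y : Bool, QR.star himp ζ y x * ζ x y
        rw [iSup_bool_eq, hst_t x, hst_f x,
          show QR.id PUnit x x = (1 : Q) from if_pos rfl]
        show (1 : Q) ≤ q * q ⊔ p * p
        rw [hqq, hpp, hint, sup_comm, hsup]
      · intro y y'
        show (⨆ u : PUnit, ζ u y' * QR.star himp ζ y u) ≤ QR.id Bool y y'
        rw [iSup_unique]
        cases y <;> cases y'
        · rw [hst_f, eid1]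
          show p * p ≤ 1
          exact hle1 _
        · rw [hst_f, eid0 false true (by simp)]
          show q * p ≤ ⊥
          rw [mul_comm]
          exact hpq.le
        · rw [hst_t, eid0 true false (by simp)]
          show p * q ≤ ⊥
          exact hpq.le
        · rw [hst_t, eid1]
          show q * q ≤ 1
          exact hle1 _
    obtain ⟨f, hf⟩ := H PUnit Bool ζ hmap
    have hval := congrFun (congrFun hf PUnit.unit) (f PUnit.unit)
    simp only [QR.graph, if_true] at hval
    cases hfu : f PUnit.unit
    · rw [hfu] at hval
      exact hp ((show p = 1 from hval).trans hint)
    · rw [hfu] at hval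
      exact hq ((show q = 1 from hval).trans hint)
  · -- lattice property → every Q-map is a graph
    intro H X Y ζ hζ
    have key : ∀ x : X, ∃ y : Y, ζ x y = ⊤ ∧ ∀ z, z ≠ y → ζ x z = ⊥ := by
      intro x
      set c : Y → Q := fun y => QR.star himp ζ y x * ζ x y with hc
      have hsup_c : ⨆ y, c y = ⊤ := by
        apply le_antisymm le_top
        have h1 := hζ.1 x x
        rw [show QR.id X x x = (1 : Q) from if_pos rfl, hint] at h1
        exact h1
      have horth : ∀ y z : Y, y ≠ z → c y * c z = ⊥ := by
        intro y z hyz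
        apply le_antisymm _ bot_le
        have h1 : c y ≤ himp (ζ x z) ⊥ := by
          have h2 : QR.star himp ζ y x ≤ himp (ζ x z) (QR.id Y y z) := iInf_le _ z
          simp only [QR.id] at h2
          rw [if_neg hyz] at h2
          exact le_trans (hmul_le_left _ _) h2
        have h2 : c z ≤ ζ x z := hmul_le_right _ _
        calc c y * c z ≤ himp (ζ x z) ⊥ * ζ x z := hmul_le_mul _ _ _ _ h1 h2
        _ ≤ ⊥ := (hres _ _ _).2 le_rfl
      have hcases : ∀ y : Y, c y = ⊤ ∨ c y = ⊥ := by
        intro y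
        set r : Q := ⨆ z : {z : Y // z ≠ y}, c z.1 with hr
        have hsr : c y ⊔ r = ⊤ := by
          apply le_antisymm le_top
          rw [← hsup_c]
          apply iSup_le
          intro z
          by_cases hz : z = y
          · subst hz; exact le_sup_left
          · exact le_sup_of_le_right (le_iSup (fun w : {z : Y // z ≠ y} => c w.1) ⟨z, hz⟩)
        have hmr : c y * r = ⊥ := by
          rw [hr, hmul_iSup]
          apply le_antisymm _ bot_le
          apply iSup_le
          intro z
          exact le_of_eq (horth y z.1 (Ne.symm z.2))
        rcases H (c y) r hsr hmr with h | h
        · exact Or.inl h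
        · right
          rw [h, htop, mul_one] at hmr
          exact hmr
      have hex : ∃ y, c y = ⊤ := by
        by_contra hno
        push_neg at hno
        have hall : ∀ y, c y = ⊥ := fun y => (hcases y).resolve_left (hno y)
        have hTB : (⊤ : Q) = ⊥ := by
          rw [← hsup_c]
          simp [hall]
        exact hbot.ne' (hint.trans hTB)
      obtain ⟨y, hy⟩ := hex
      refine ⟨y, ?_, ?_⟩
      · exact le_antisymm le_top (hy ▸ hmul_le_right (QR.star himp ζ y x) (ζ x y))
      · intro z hz
        have hst : QR.star himp ζ y x = ⊤ :=
          le_antisymm le_top (hy ▸ hmul_le_left (QR.star himp ζ y x) (ζ x y))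
        have h1 : QR.star himp ζ y x ≤ himp (ζ x z) ⊥ := by
          have h2 : QR.star himp ζ y x ≤ himp (ζ x z) (QR.id Y y z) := iInf_le _ z
          simp only [QR.id] at h2
          rwa [if_neg (Ne.symm hz)] at h2
        rw [hst] at h1
        have h3 : ⊤ * ζ x z ≤ ⊥ := (hres _ _ _).2 h1
        rw [htop_mul] at h3
        exact le_antisymm h3 bot_le
    choose f hf1 hf2 using key
    refine ⟨f, ?_⟩
    funext x y
    by_cases h : y = f x
    · subst h
      rw [hf1 x]
      simp only [QR.graph, if_true]
      exact hint.symm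
    · rw [hf2 x y h]
      simp only [QR.graph]
      rw [if_neg h]
end
end

section
/- Let ζ : X ⇸ Y be a surjective Q-map, i.e., a Q-map with ζ∘ζ* = id_Y, and for each y ∈ Y define S_y : X → Q by S_y(x) = ζ(x,y) & ζ*(y,x). Then the family (S_y)_{y∈Y} satisfies: S_y(x) & S_{y'}(x) = ⊥ for all x ∈ X whenever y ≠ y'; ⋁_{y∈Y} S_y(x) = k for all x ∈ X; ⋁_{x∈X} S_y(x) = k for all y ∈ Y; and y ≠ y' implies S_y ≠ S_{y'} (so {S_y : y ∈ Y} is a Q-partition of X). -/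
open Classical

noncomputable section

/-- a surjective `Q`-map `ζ : X ⇸ Y` induces a `Q`-partition
`{S_y : y ∈ Y}` of `X`, where `S_y x = ζ(x,y) & ζ*(y,x)`, and `y ≠ y' → S_y ≠ S_{y'}`. -/
theorem stmt12 {Q : Type*} [CompleteLattice Q] [CommMonoid Q]
    (hbot : (⊥ : Q) < 1)
    (hdist : ∀ (p : Q) (s : Set Q), p * sSup s = ⨆ q ∈ s, p * q)
    (himp : Q → Q → Q)
    (hres : ∀ p q r : Q, p * q ≤ r ↔ p ≤ himp q r)
    {X Y : Type*} (ζ : X → Y → Q)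
    (hζ : QR.IsMap himp ζ)
    (hsur : QR.comp ζ (QR.star himp ζ) = QR.id Y)
    (S : Y → X → Q) (hS : ∀ y x, S y x = ζ x y * QR.star himp ζ y x) :
    (∀ (x : X) (y y' : Y), y ≠ y' → S y x * S y' x = ⊥) ∧
    (∀ x : X, (⨆ y, S y x) = 1) ∧
    (∀ y : Y, (⨆ x, S y x) = 1) ∧
    (∀ y y' : Y, y ≠ y' → S y ≠ S y') := by
  -- basic consequences of distributivity / residuation
  have mul_bot : ∀ p : Q, p * (⊥ : Q) = ⊥ := by
    intro p
    have h := hdist p ∅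
    simpa using h
  have mul_iSup : ∀ {ι : Type _} (p : Q) (f : ι → Q), p * (⨆ i, f i) = ⨆ i, p * f i := by
    intro ι p f
    rw [← sSup_range, hdist, iSup_range]
  have mulr : ∀ {a b : Q} (c : Q), a ≤ b → a * c ≤ b * c := by
    intro a b c h
    have hb : b ≤ himp c (b * c) := (hres b c (b * c)).1 le_rfl
    exact (hres a c (b * c)).2 (h.trans hb)
  have mull : ∀ {a b : Q} (c : Q), a ≤ b → c * a ≤ c * b := by
    intro a b c h
    rw [mul_comm c a, mul_comm c b]
    exact mulr c h
  -- pointwise bound from surjectivity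
  have hpt : ∀ (x : X) (y y' : Y), ζ x y' * QR.star himp ζ y x ≤ QR.id Y y y' := by
    intro x y y'
    have hc : QR.comp ζ (QR.star himp ζ) y y' = QR.id Y y y' := by
      rw [hsur]
    calc ζ x y' * QR.star himp ζ y x
        ≤ QR.comp ζ (QR.star himp ζ) y y' :=
          le_iSup (fun x => ζ x y' * QR.star himp ζ y x) x
      _ = QR.id Y y y' := hc
  have hle1 : ∀ (y : Y) (x : X), S y x ≤ 1 := by
    intro y x
    have h := hpt x y y
    rw [hS]
    simpa [QR.id] using h
  -- part 1: disjointness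
  have part1 : ∀ (x : X) (y y' : Y), y ≠ y' → S y x * S y' x = ⊥ := by
    intro x y y' hne
    have hb : ζ x y' * QR.star himp ζ y x = ⊥ := by
      have h := hpt x y y'
      simp only [QR.id, if_neg hne] at h
      exact le_bot_iff.1 h
    calc S y x * S y' x
        = (ζ x y * QR.star himp ζ y' x) * (ζ x y' * QR.star himp ζ y x) := by
          rw [hS, hS]; ac_rfl
      _ = (ζ x y * QR.star himp ζ y' x) * ⊥ := by rw [hb]
      _ = ⊥ := mul_bot _
  -- part 3: total on each block
  have part3 : ∀ y : Y, (⨆ x, S y x) = 1 := by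
    intro y
    have h := congrFun (congrFun hsur y) y
    simp only [QR.comp, QR.id, if_pos rfl] at h
    calc (⨆ x, S y x) = ⨆ x, ζ x y * QR.star himp ζ y x := by
          exact iSup_congr (fun x => hS y x)
      _ = 1 := h
  -- part 2: covers every point
  have part2 : ∀ x : X, (⨆ y, S y x) = 1 := by
    intro x
    apply le_antisymm
    · exact iSup_le (fun y => hle1 y x)
    · have h1 : (1 : Q) ≤ QR.comp (QR.star himp ζ) ζ x x := by
        have := hζ.1 x x
        simpa [QR.id] using this
      refine h1.trans ?_
      simp only [QR.comp]
      apply iSup_mono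
      intro y
      rw [hS]
      exact (mul_comm _ _).le
  -- idempotency of the values S y x
  have hidem : ∀ (y : Y) (x : X), S y x * S y x = S y x := by
    intro y x
    apply le_antisymm
    · calc S y x * S y x ≤ S y x * 1 := mull (S y x) (hle1 y x)
        _ = S y x := mul_one _
    · have h1 : (1 : Q) ≤ ⨆ y'', QR.star himp ζ y'' x * ζ x y'' := by
        have := hζ.1 x x
        simpa [QR.id, QR.comp] using this
      calc S y x = S y x * 1 := (mul_one _).symm
        _ ≤ S y x * ⨆ y'', QR.star himp ζ y'' x * ζ x y'' := mull _ h1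
        _ = ⨆ y'', S y x * (QR.star himp ζ y'' x * ζ x y'') := mul_iSup _ _
        _ ≤ S y x * S y x := by
            apply iSup_le
            intro y''
            by_cases h : y'' = y
            · subst h
              rw [hS]
              apply le_of_eq
              ac_rfl
            · have hb : ζ x y * QR.star himp ζ y'' x = ⊥ := by
                have hp := hpt x y'' y
                simp only [QR.id, if_neg h] at hp
                exact le_bot_iff.1 hp
              have : S y x * (QR.star himp ζ y'' x * ζ x y'')
                  = (QR.star himp ζ y x * ζ x y'') * (ζ x y * QR.star himp ζ y'' x) := by
                rw [hS]; ac_rfl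
              rw [this, hb, mul_bot]
              exact bot_le
  refine ⟨part1, part2, part3, ?_⟩
  intro y y' hne heq
  have hzero : ∀ x, S y x = ⊥ := by
    intro x
    have h := hidem y x
    rw [show S y x * S y x = S y x * S y' x from by rw [← heq]] at h
    rw [part1 x y y' hne] at h
    exact h.symm
  have : (1 : Q) = ⊥ := by
    rw [← part3 y]
    simp [hzero]
  exact hbot.ne' this
end
end

section
/- Let Σ be a Q-partition of a set X. Then the Q-relation ζ_Σ : X ⇸ Σ defined by ζ_Σ(x,S) = Sx is a surjective Q-map; in fact ζ_Σ ⊣ ζ_Σ^op (i.e., id_X ≤ ζ_Σ^op ∘ ζ_Σ and ζ_Σ ∘ ζ_Σ^op ≤ id_Σ) and ζ_Σ ∘ ζ_Σ^op = id_Σ, where ζ_Σ^op(S,x) = ζ_Σ(x,S). -/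
open Classical

noncomputable section

/-- for a `Q`-partition `P` of `X`, the `Q`-relation
`ζ_P (x, S) = S x` is a surjective `Q`-map; in fact `ζ_P ⊣ ζ_P^op` and
`ζ_P ∘ ζ_P^op = id_P`. -/
theorem stmt13 {Q : Type*} [CompleteLattice Q] [CommMonoid Q]
    (hbot : (⊥ : Q) < 1)
    (hdist : ∀ (p : Q) (s : Set Q), p * sSup s = ⨆ q ∈ s, p * q)
    (himp : Q → Q → Q)
    (hres : ∀ p q r : Q, p * q ≤ r ↔ p ≤ himp q r)
    {X : Type*} (P : Set (X → Q))
    (hdisj : ∀ (x : X), ∀ S ∈ P, ∀ T ∈ P, S ≠ T → S x * T x = ⊥)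
    (hsupS : ∀ x : X, (⨆ S : ↥P, (S : X → Q) x) = 1)
    (hsupx : ∀ S ∈ P, (⨆ x : X, S x) = 1)
    (ζ : X → ↥P → Q) (hζ : ∀ (x : X) (S : ↥P), ζ x S = (S : X → Q) x) :
    QR.IsMap himp ζ ∧
    QR.comp ζ (QR.star himp ζ) = QR.id ↥P ∧
    (∀ x x' : X, QR.id X x x' ≤ QR.comp (fun (S : ↥P) (x : X) => ζ x S) ζ x x') ∧
    (∀ S T : ↥P, QR.comp ζ (fun (S : ↥P) (x : X) => ζ x S) S T ≤ QR.id ↥P S T) ∧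
    QR.comp ζ (fun (S : ↥P) (x : X) => ζ x S) = QR.id ↥P := by
  -- monotonicity of multiplication (from residuation)
  have hmono : ∀ {a b c d : Q}, a ≤ b → c ≤ d → a * c ≤ b * d := by
    intro a b c d hab hcd
    have h1 : a * c ≤ b * c := by
      have hb : b ≤ himp c (b * c) := (hres b c (b * c)).mp le_rfl
      exact (hres a c (b * c)).mpr (le_trans hab hb)
    have h2 : b * c ≤ b * d := by
      rw [mul_comm b c, mul_comm b d]
      have hd : d ≤ himp b (d * b) := (hres d b (d * b)).mp le_rfl
      exact (hres c b (d * b)).mpr (le_trans hcd hd)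
    exact le_trans h1 h2
  have hone : ∀ (x : X) (S : ↥P), (S : X → Q) x ≤ 1 := fun x S =>
    (hsupS x) ▸ le_iSup (fun T : ↥P => (T : X → Q) x) S
  -- key idempotency: S x * S x = S x
  have key : ∀ (x : X) (S : ↥P), (S : X → Q) x * (S : X → Q) x = (S : X → Q) x := by
    intro x S
    have h1 : (S : X → Q) x * (⨆ T : ↥P, (T : X → Q) x)
        = ⨆ T : ↥P, (S : X → Q) x * (T : X → Q) x := by
      rw [iSup, hdist, iSup_range]
    have h2 : (⨆ T : ↥P, (S : X → Q) x * (T : X → Q) x)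
        = (S : X → Q) x * (S : X → Q) x := by
      apply le_antisymm
      · apply iSup_le; intro T
        by_cases hST : T = S
        · subst hST; exact le_rfl
        · rw [hdisj x S S.2 T T.2 (fun h => hST (Subtype.ext h.symm))]
          exact bot_le
      · exact le_iSup (fun T : ↥P => (S : X → Q) x * (T : X → Q) x) S
    rw [hsupS, mul_one] at h1
    rw [← h2, ← h1]
  -- off-diagonal vanishing
  have hoff : ∀ (x : X) (S T : ↥P), S ≠ T → ζ x T * ζ x S = ⊥ := by
    intro x S T h
    rw [hζ, hζ]
    exact hdisj x T T.2 S S.2 (fun hc => h (Subtype.ext hc.symm))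
  -- diagonal sups
  have hdiagS : ∀ x : X, (⨆ S : ↥P, ζ x S * ζ x S) = 1 := by
    intro x
    rw [← hsupS x]
    exact iSup_congr fun S => by rw [hζ, key]
  have hdiagx : ∀ S : ↥P, (⨆ x : X, ζ x S * ζ x S) = 1 := by
    intro S
    rw [← hsupx S S.2]
    exact iSup_congr fun x => by rw [hζ, key]
  -- ζ^op ≤ ζ*
  have hle : ∀ (S : ↥P) (x : X), ζ x S ≤ QR.star himp ζ S x := by
    intro S x
    refine le_iInf fun T => (hres _ _ _).mp ?_
    by_cases hST : S = T
    · subst hST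
      have : ζ x S * ζ x S ≤ 1 := by
        rw [hζ, key]; exact hone x S
      simpa [QR.id] using this
    · exact le_trans (le_of_eq (hoff x T S (fun h => hST h.symm))) bot_le
  -- ζ ∘ ζ* ≤ id (generic from residuation)
  have hb : ∀ S T : ↥P, QR.comp ζ (QR.star himp ζ) S T ≤ QR.id ↥P S T := by
    intro S T
    apply iSup_le; intro x
    have h1 : QR.star himp ζ S x ≤ himp (ζ x T) (QR.id ↥P S T) :=
      iInf_le (fun z => himp (ζ x z) (QR.id ↥P S z)) T
    calc ζ x T * QR.star himp ζ S x
        = QR.star himp ζ S x * ζ x T := mul_comm _ _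
      _ ≤ QR.id ↥P S T := (hres _ _ _).mpr h1
  -- comp ζ ζ^op ≤ id
  have hc : ∀ S T : ↥P, QR.comp ζ (fun (S : ↥P) (x : X) => ζ x S) S T ≤ QR.id ↥P S T := by
    intro S T
    apply iSup_le; intro x
    by_cases hST : S = T
    · subst hST
      have : ζ x S * ζ x S ≤ 1 := by rw [hζ, key]; exact hone x S
      simpa [QR.id] using this
    · exact le_trans (le_of_eq (hoff x S T hST)) bot_le
  -- comp ζ ζ^op ≥ id (diagonal)
  have hd : ∀ S T : ↥P, QR.id ↥P S T ≤ QR.comp ζ (fun (S : ↥P) (x : X) => ζ x S) S T := by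
    intro S T
    by_cases hST : S = T
    · subst hST
      have h1 : QR.id (↥P) S S = (1 : Q) := if_pos rfl
      rw [h1]
      exact le_of_eq (hdiagx S).symm
    · simp only [QR.id, if_neg hST]
      exact bot_le
  refine ⟨⟨?_, hb⟩, ?_, ?_, hc, ?_⟩
  · -- id_X ≤ ζ* ∘ ζ
    intro x x'
    by_cases hxx : x = x'
    · subst hxx
      have h1 : QR.id X x x = (1 : Q) := if_pos rfl
      rw [h1, ← hdiagS x]
      exact iSup_mono fun S => hmono (hle S x) le_rfl
    · simp only [QR.id, if_neg hxx]
      exact bot_le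
  · -- ζ ∘ ζ* = id
    funext S T
    refine le_antisymm (hb S T) ?_
    refine le_trans (hd S T) ?_
    exact iSup_mono fun x => hmono le_rfl (hle S x)
  · -- id_X ≤ ζ^op ∘ ζ
    intro x x'
    by_cases hxx : x = x'
    · subst hxx
      have h1 : QR.id X x x = (1 : Q) := if_pos rfl
      rw [h1]
      exact le_of_eq (hdiagS x).symm
    · simp only [QR.id, if_neg hxx]
      exact bot_le
  · -- ζ ∘ ζ^op = id
    funext S T
    exact le_antisymm (hc S T) (hd S T)
end
end

section
/- Let Σ be a Q-partition of a set X and let ζ_Σ : X ⇸ Σ be the surjective Q-map defined by ζ_Σ(x,S) = Sx. Then the Q-partition induced by ζ_Σ coincides with Σ; concretely, for every T ∈ Σ and x ∈ X one has ζ_Σ(x,T) & (ζ_Σ)*(T,x) = Tx, so Σ_{ζ_Σ} = Σ. -/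
open Classical

noncomputable section

/-- for a `Q`-partition `P` of `X` with associated surjective `Q`-map
`ζ_P (x, S) = S x`, the induced `Q`-partition coincides with `P`:
`ζ_P(x,T) & ζ_P*(T,x) = T x` for all `T ∈ P` and `x ∈ X`, so `Σ_{ζ_P} = P`. -/
theorem stmt14 {Q : Type*} [CompleteLattice Q] [CommMonoid Q]
    (hbot : (⊥ : Q) < 1)
    (hdist : ∀ (p : Q) (s : Set Q), p * sSup s = ⨆ q ∈ s, p * q)
    (himp : Q → Q → Q)
    (hres : ∀ p q r : Q, p * q ≤ r ↔ p ≤ himp q r)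
    {X : Type*} (P : Set (X → Q))
    (hdisj : ∀ (x : X), ∀ S ∈ P, ∀ T ∈ P, S ≠ T → S x * T x = ⊥)
    (hsupS : ∀ x : X, (⨆ S : ↥P, (S : X → Q) x) = 1)
    (hsupx : ∀ S ∈ P, (⨆ x : X, S x) = 1)
    (ζ : X → ↥P → Q) (hζ : ∀ (x : X) (S : ↥P), ζ x S = (S : X → Q) x) :
    (∀ (T : ↥P) (x : X), ζ x T * QR.star himp ζ T x = (T : X → Q) x) ∧
    Set.range (fun T : ↥P => fun x : X => ζ x T * QR.star himp ζ T x) = P := by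
  -- monotonicity of multiplication in the right argument
  have hmono : ∀ p q r : Q, q ≤ r → p * q ≤ p * r := by
    intro p q r h
    have hsup : sSup ({q, r} : Set Q) = r := by
      rw [sSup_pair, sup_eq_right.mpr h]
    have := hdist p {q, r}
    rw [hsup] at this
    rw [this]
    exact le_biSup _ (by simp)
  have hdist' : ∀ (p : Q) (f : ↥P → Q), p * (⨆ i, f i) = ⨆ i, p * f i := by
    intro p f
    rw [iSup, hdist]
    exact iSup_range
  have key : ∀ (T : ↥P) (x : X), ζ x T * QR.star himp ζ T x = (T : X → Q) x := by
    intro T x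
    set a := (T : X → Q) x with ha
    have hle1 : a ≤ 1 := by
      rw [← hsupS x]; exact le_iSup (fun S : ↥P => (S : X → Q) x) T
    have hidem : a * a = a := by
      have h1 : a * (⨆ S : ↥P, (S : X → Q) x) = ⨆ S : ↥P, a * (S : X → Q) x :=
        hdist' a _
      rw [hsupS x, mul_one] at h1
      have h2 : (⨆ S : ↥P, a * (S : X → Q) x) = a * a := by
        apply le_antisymm
        · apply iSup_le; intro S
          by_cases hST : S = T
          · subst hST; exact le_rfl
          · have hb : (T : X → Q) x * (S : X → Q) x = ⊥ :=
              hdisj x T T.2 S S.2 (fun h => hST (Subtype.ext h.symm))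
            rw [ha, hb]
            exact bot_le
        · exact le_iSup (fun S : ↥P => a * (S : X → Q) x) T
      exact h2.symm.trans h1.symm
    have hstar_ge : a ≤ QR.star himp ζ T x := by
      apply le_iInf
      intro S
      apply (hres a (ζ x S) _).mp
      rw [hζ x S]
      by_cases hST : T = S
      · subst hST
        simp only [QR.id, if_pos rfl]
        rw [← ha, hidem]
        exact hle1
      · simp only [QR.id, if_neg hST]
        have hb : (S : X → Q) x * (T : X → Q) x = ⊥ :=
          hdisj x S S.2 T T.2 (fun h => hST (Subtype.ext h.symm))
        rw [ha, mul_comm, hb]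
    have hstar_le : ζ x T * QR.star himp ζ T x ≤ 1 := by
      have h3 : QR.star himp ζ T x ≤ himp (ζ x T) (QR.id ↥P T T) :=
        iInf_le _ T
      simp only [QR.id, if_pos rfl] at h3
      have := (hres (QR.star himp ζ T x) (ζ x T) 1).mpr h3
      rwa [mul_comm] at this
    rw [hζ x T, ← ha] at hstar_le ⊢
    apply le_antisymm
    · calc a * QR.star himp ζ T x = a * (a * QR.star himp ζ T x) := by
            rw [← mul_assoc, hidem]
          _ ≤ a * 1 := hmono a _ 1 hstar_le
          _ = a := mul_one a
    · calc a = a * a := hidem.symm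
          _ ≤ a * QR.star himp ζ T x := hmono a a _ hstar_ge
  refine ⟨key, ?_⟩
  have heq : (fun T : ↥P => fun x : X => ζ x T * QR.star himp ζ T x)
      = fun T : ↥P => (T : X → Q) := by
    funext T x; exact key T x
  rw [heq, Subtype.range_coe]
end
end

section
/- Let G be a group with identity element e, and let μ : {⋆} ⇸ G be a Q-map. Let G₀ = {a ∈ G : a ≠ e} and let (G₀)₊ = G₀ ⊔ {⋆}. Define Q-relations ζ : G ⇸ (G₀)₊ by ζ(x,a) = μ*(x·a, ⋆) for a ∈ G₀ and ζ(x,⋆) = μ*(x,⋆), and η : (G₀)₊ ⇸ G by η(a,x) = μ(⋆, x·a) for a ∈ G₀ and η(⋆,x) = μ(⋆,x). Then η∘ζ = id_G, ζ∘η = id_{(G₀)₊}, ζ∘μ = τ, and η∘τ = μ, where τ : {⋆} ⇸ (G₀)₊ is given by τ(⋆,⋆) = k and τ(⋆,a) = ⊥ for a ∈ G₀. In particular, ζ and η are mutually inverse Q-maps exhibiting an isomorphism between the object μ of {⋆}/Q-Map and the free algebra (G₀)₊. -/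
open Classical

noncomputable section

lemma QRaux.gen2 {Q : Type*} [CompleteLattice Q] [CommMonoid Q]
    (himp : Q → Q → Q) (hres : ∀ p q r : Q, p * q ≤ r ↔ p ≤ himp q r)
    {X Y : Type*} (ζ' : X → Y → Q) (y y' : Y) :
    QR.comp ζ' (QR.star himp ζ') y y' ≤ QR.id Y y y' := by
  apply iSup_le; intro x
  rw [mul_comm]
  exact (hres _ _ _).2 (iInf_le (fun z => himp (ζ' x z) (QR.id Y y z)) y')

lemma QRaux.adj {Q : Type*} [CompleteLattice Q] [CommMonoid Q]
    (himp : Q → Q → Q) (hres : ∀ p q r : Q, p * q ≤ r ↔ p ≤ himp q r)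
    {X Y : Type*} (ζ' : X → Y → Q) (η' : Y → X → Q)
    (h : QR.comp ζ' η' = QR.id Y) (y : Y) (x : X) :
    η' y x ≤ QR.star himp ζ' y x := by
  apply le_iInf; intro z
  refine (hres _ _ _).1 ?_
  calc η' y x * ζ' x z = ζ' x z * η' y x := mul_comm _ _
    _ ≤ QR.comp ζ' η' y z := le_iSup (fun x => ζ' x z * η' y x) x
    _ = QR.id Y y z := by rw [h]

/-- for a group `G` (identity `e = 1`) and a `Q`-map `μ : {⋆} ⇸ G`,
the `Q`-relations `ζ : G ⇸ (G₀)₊` and `η : (G₀)₊ ⇸ G` built from `μ` (where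
`G₀ = {a ∈ G : a ≠ e}` and `(G₀)₊ = G₀ ⊔ {⋆}`) satisfy `η ∘ ζ = id_G`,
`ζ ∘ η = id_{(G₀)₊}`, `ζ ∘ μ = τ` and `η ∘ τ = μ`; in particular `ζ` and `η`
are mutually inverse `Q`-maps exhibiting an isomorphism between `μ` and the
free algebra on `G₀` in `{⋆}/Q-Map`. -/
theorem stmt17 {Q : Type*} [CompleteLattice Q] [CommMonoid Q]
    (hbot : (⊥ : Q) < 1)
    (hdist : ∀ (p : Q) (s : Set Q), p * sSup s = ⨆ q ∈ s, p * q)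
    (himp : Q → Q → Q)
    (hres : ∀ p q r : Q, p * q ≤ r ↔ p ≤ himp q r)
    {G : Type*} [Group G]
    (μ : PUnit → G → Q) (hμ : QR.IsMap himp μ)
    (ζ : G → ({a : G // a ≠ 1} ⊕ PUnit) → Q)
    (hζl : ∀ (x : G) (a : {a : G // a ≠ 1}),
      ζ x (Sum.inl a) = QR.star himp μ (x * (a : G)) PUnit.unit)
    (hζr : ∀ x : G, ζ x (Sum.inr PUnit.unit) = QR.star himp μ x PUnit.unit)
    (η : ({a : G // a ≠ 1} ⊕ PUnit) → G → Q)
    (hηl : ∀ (a : {a : G // a ≠ 1}) (x : G),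
      η (Sum.inl a) x = μ PUnit.unit (x * (a : G)))
    (hηr : ∀ x : G, η (Sum.inr PUnit.unit) x = μ PUnit.unit x)
    (τ : PUnit → ({a : G // a ≠ 1} ⊕ PUnit) → Q)
    (hτl : ∀ a : {a : G // a ≠ 1}, τ PUnit.unit (Sum.inl a) = ⊥)
    (hτr : τ PUnit.unit (Sum.inr PUnit.unit) = 1) :
    QR.comp η ζ = QR.id G ∧
    QR.comp ζ η = QR.id ({a : G // a ≠ 1} ⊕ PUnit) ∧
    QR.comp ζ μ = τ ∧
    QR.comp η τ = μ ∧
    QR.IsMap himp ζ ∧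
    QR.IsMap himp η := by
  -- basic consequences of the quantale axioms
  have mul_bot : ∀ p : Q, p * ⊥ = ⊥ := by
    intro p
    have h := hdist p ∅
    simpa using h
  have mono : ∀ {p q : Q} (r : Q), p ≤ q → r * p ≤ r * q := by
    intro p q r h
    have hq : q = sSup {p, q} := by rw [sSup_pair, sup_eq_right.mpr h]
    rw [hq, hdist]
    exact le_iSup₂ (f := fun q' (_ : q' ∈ ({p, q} : Set Q)) => r * q') p
      (Set.mem_insert p _)
  -- facts about μ
  have fact1 : ∀ y z : G,
      μ PUnit.unit z * QR.star himp μ y PUnit.unit ≤ QR.id G y z := fun y z =>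
    le_trans (le_iSup (fun p => μ p z * QR.star himp μ y p) PUnit.unit) (hμ.2 y z)
  have fact1' : ∀ y z : G,
      QR.star himp μ y PUnit.unit * μ PUnit.unit z ≤ QR.id G y z := by
    intro y z; rw [mul_comm]; exact fact1 y z
  have fact2 : (1 : Q) ≤ ⨆ y : G, QR.star himp μ y PUnit.unit * μ PUnit.unit y := by
    have h := hμ.1 PUnit.unit PUnit.unit
    simpa [QR.id, QR.comp] using h
  have idG_eq : ∀ {y z : G}, y = z → QR.id G y z = (1 : Q) := by
    intro y z h; simp [QR.id, h]
  have idG_ne : ∀ {y z : G}, y ≠ z → QR.id G y z = (⊥ : Q) := by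
    intro y z h; simp [QR.id, h]
  -- Part 1 : η ∘ ζ = id_G
  have part1 : QR.comp η ζ = QR.id G := by
    funext x x'
    show (⨆ c, η c x' * ζ x c) = QR.id G x x'
    by_cases hxx : x = x'
    · subst hxx
      rw [idG_eq rfl]
      apply le_antisymm
      · apply iSup_le
        rintro (a | p)
        · rw [hηl, hζl]
          exact (fact1 _ _).trans (idG_eq rfl).le
        · cases p
          rw [hηr, hζr]
          exact (fact1 x x).trans (idG_eq rfl).le
      · refine fact2.trans (iSup_le fun y => ?_)
        by_cases hy : y = x
        · subst hy
          refine le_trans ?_ (le_iSup _ (Sum.inr PUnit.unit))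
          rw [hηr, hζr, mul_comm]
        · refine le_trans ?_
            (le_iSup _ (Sum.inl ⟨x⁻¹ * y, fun h => hy (inv_mul_eq_one.mp h).symm⟩))
          rw [hηl, hζl]
          simp only [mul_inv_cancel_left]
          rw [mul_comm]
    · rw [idG_ne hxx]
      refine le_antisymm (iSup_le ?_) bot_le
      rintro (a | p)
      · rw [hηl, hζl]
        refine (fact1 _ _).trans ?_
        rw [idG_ne (fun h => hxx (mul_right_cancel h))]
      · cases p
        rw [hηr, hζr]
        exact (fact1 _ _).trans (idG_ne hxx).le
  -- Part 2 : ζ ∘ η = id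
  have part2 : QR.comp ζ η = QR.id ({a : G // a ≠ 1} ⊕ PUnit) := by
    funext b c
    show (⨆ x : G, ζ x c * η b x) = QR.id _ b c
    rcases b with a | p <;> rcases c with a' | p'
    · by_cases haa : a = a'
      · subst haa
        have : QR.id ({a : G // a ≠ 1} ⊕ PUnit) (Sum.inl a) (Sum.inl a) = (1 : Q) := by
          simp [QR.id]
        rw [this]
        apply le_antisymm
        · apply iSup_le; intro x
          rw [hζl, hηl]
          exact (fact1' _ _).trans (idG_eq rfl).le
        · refine fact2.trans (iSup_le fun y => ?_)
          refine le_trans ?_ (le_iSup _ (y * (a : G)⁻¹))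
          rw [hζl, hηl, inv_mul_cancel_right]
      · have : QR.id ({a : G // a ≠ 1} ⊕ PUnit) (Sum.inl a) (Sum.inl a') = (⊥ : Q) := by
          simp [QR.id, haa]
        rw [this]
        refine le_antisymm (iSup_le fun x => ?_) bot_le
        rw [hζl, hηl]
        refine (fact1' _ _).trans ?_
        refine (idG_ne fun h => haa ?_).le
        exact Subtype.ext (mul_left_cancel h).symm
    · cases p'
      have : QR.id ({a : G // a ≠ 1} ⊕ PUnit) (Sum.inl a) (Sum.inr PUnit.unit) = (⊥ : Q) := by
        simp [QR.id]
      rw [this]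
      refine le_antisymm (iSup_le fun x => ?_) bot_le
      rw [hζr, hηl]
      refine (fact1' _ _).trans ?_
      refine (idG_ne fun h => a.2 ?_).le
      exact mul_left_cancel (a := x) (by rw [mul_one]; exact h.symm)
    · cases p
      have : QR.id ({a : G // a ≠ 1} ⊕ PUnit) (Sum.inr PUnit.unit) (Sum.inl a') = (⊥ : Q) := by
        simp [QR.id]
      rw [this]
      refine le_antisymm (iSup_le fun x => ?_) bot_le
      rw [hζl, hηr]
      refine (fact1' _ _).trans ?_
      refine (idG_ne fun h => a'.2 ?_).le
      exact mul_left_cancel (a := x) (by rw [mul_one]; exact h)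
    · cases p; cases p'
      have : QR.id ({a : G // a ≠ 1} ⊕ PUnit) (Sum.inr PUnit.unit) (Sum.inr PUnit.unit) = (1 : Q) := by
        simp [QR.id]
      rw [this]
      apply le_antisymm
      · apply iSup_le; intro x
        rw [hζr, hηr]
        exact (fact1' _ _).trans (idG_eq rfl).le
      · refine fact2.trans (iSup_le fun y => ?_)
        refine le_trans ?_ (le_iSup _ y)
        rw [hζr, hηr]
  -- Part 3 : ζ ∘ μ = τ
  have part3 : QR.comp ζ μ = τ := by
    funext p c
    cases p
    rcases c with a | p'
    · rw [hτl]
      refine le_antisymm (iSup_le fun x => ?_) bot_le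
      rw [hζl]
      refine (fact1' _ _).trans ?_
      refine (idG_ne fun h => a.2 ?_).le
      exact mul_left_cancel (a := x) (by rw [mul_one]; exact h)
    · cases p'
      rw [hτr]
      apply le_antisymm
      · apply iSup_le; intro x
        rw [hζr]
        exact (fact1' _ _).trans (idG_eq rfl).le
      · refine fact2.trans (iSup_le fun y => ?_)
        refine le_trans ?_ (le_iSup _ y)
        rw [hζr]
  -- Part 4 : η ∘ τ = μ
  have part4 : QR.comp η τ = μ := by
    funext p x
    cases p
    apply le_antisymm
    · apply iSup_le
      rintro (a | p')
      · rw [hτl, mul_bot]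
        exact bot_le
      · cases p'
        rw [hτr, hηr, mul_one]
    · refine le_trans ?_ (le_iSup _ (Sum.inr PUnit.unit))
      rw [hτr, hηr, mul_one]
  have map_ζ : QR.IsMap himp ζ := by
    constructor
    · intro x x'
      calc QR.id G x x' = QR.comp η ζ x x' := by rw [part1]
        _ ≤ QR.comp (QR.star himp ζ) ζ x x' := by
            apply iSup_le; intro c
            refine le_trans ?_ (le_iSup _ c)
            rw [mul_comm (η c x'), mul_comm (QR.star himp ζ c x')]
            exact mono _ (QRaux.adj himp hres ζ η part2 c x')
    · exact QRaux.gen2 himp hres ζ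
  have map_η : QR.IsMap himp η := by
    constructor
    · intro b c
      calc QR.id _ b c = QR.comp ζ η b c := by rw [part2]
        _ ≤ QR.comp (QR.star himp η) η b c := by
            apply iSup_le; intro x
            refine le_trans ?_ (le_iSup _ x)
            rw [mul_comm (ζ x c), mul_comm (QR.star himp η x c)]
            exact mono _ (QRaux.adj himp hres η ζ part1 x c)
    · exact QRaux.gen2 himp hres η
  exact ⟨part1, part2, part3, part4, map_ζ, map_η⟩
end
end
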